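/- Let G be a connected digraph, u ≠ v vertices with no edge from u to v, and suppose there exists a cover tour from u to v. If P(L(u,v)) ≤ P(L(x,v)) for every out-neighbor x of u (in particular if all these probabilities are equal), then every cover tour from u to v revisits u. -/

import Mathlib

open scoped ENNReal BigOperators

/-- A nonempty list of vertices is a walk if consecutive vertices are joined by edges. -/
def IsWalk {V : Type*} (E : V → V → Prop) : List V → Prop
  | [] => False
  | [_] => True
  | a :: b :: t => E a b ∧ IsWalk E (b :: t)

/-- A digraph is connected if there is a directed walk between any two vertices. -/
def Conn {V : Type*} (E : V → V → Prop) : Prop :=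
  ∀ a b : V, ∃ l : List V, IsWalk E l ∧ l.head? = some a ∧ l.getLast? = some b

/-- The out-neighbourhood of a vertex. -/
def outNbrs {V : Type*} [Fintype V] (E : V → V → Prop) [DecidableRel E] (u : V) : Finset V :=
  Finset.univ.filter (fun x => E u x)

/-- The probability that a simple random walk (moving to a uniformly random out-neighbour
at each step) follows a given finite walk. -/
noncomputable def walkWt {V : Type*} [Fintype V] (E : V → V → Prop) [DecidableRel E] :
    List V → ℝ≥0∞
  | [] => 1
  | [_] => 1
  | a :: b :: t => ((outNbrs E a).card : ℝ≥0∞)⁻¹ * walkWt E (b :: t)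

/-- `l` is a cover tour from `u` ending at `v`: a walk starting at `u`, visiting every
vertex, ending at `v`, with `v` first visited at the final step. -/
def IsCoverTour {V : Type*} (E : V → V → Prop) (u v : V) (l : List V) : Prop :=
  IsWalk E l ∧ l.head? = some u ∧ l.getLast? = some v ∧ (∀ x : V, x ∈ l) ∧ v ∉ l.dropLast

/-- `P(L(u,v))`: the probability that a random cover tour from `u` ends at `v`,
i.e. that `v` is the last vertex to be first-visited by the random walk from `u`. -/
noncomputable def coverProb {V : Type*} [Fintype V] (E : V → V → Prop) [DecidableRel E]
    (u v : V) : ℝ≥0∞ :=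
  ∑' l : {l : List V // IsCoverTour E u v l}, walkWt E (l : List V)

section Aux

variable {V : Type*} [Fintype V] [DecidableEq V] (E : V → V → Prop) [DecidableRel E]

lemma walkWt_ne_zero : ∀ l : List V, walkWt E l ≠ 0
  | [] => by simp [walkWt]
  | [a] => by simp [walkWt]
  | a :: b :: t => by
      rw [walkWt]
      exact mul_ne_zero (ENNReal.inv_ne_zero.2 (ENNReal.natCast_ne_top _))
        (walkWt_ne_zero (b :: t))

lemma walkWt_cons (a : V) (l : List V) (hl : l ≠ []) :
    walkWt E (a :: l) = ((outNbrs E a).card : ℝ≥0∞)⁻¹ * walkWt E l := by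
  cases l with
  | nil => exact absurd rfl hl
  | cons b t => rw [walkWt]

/-- The recursive bound on first-hitting probabilities. -/
noncomputable def Bf (v : V) : ℕ → V → ℝ≥0∞
  | 0, _ => 0
  | 1, a => if a = v then 1 else 0
  | (n+2), a => if a = v then 0 else
      ((outNbrs E a).card : ℝ≥0∞)⁻¹ * ∑ b ∈ outNbrs E a, Bf v (n+1) b

lemma Bf_zero (v a : V) : Bf E v 0 a = 0 := rfl

lemma Bf_one (v a : V) : Bf E v 1 a = if a = v then 1 else 0 := rfl

lemma Bf_two (v : V) (n : ℕ) (a : V) : Bf E v (n+2) a = if a = v then 0 else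
    ((outNbrs E a).card : ℝ≥0∞)⁻¹ * ∑ b ∈ outNbrs E a, Bf E v (n+1) b := rfl

lemma Bf_sum (v : V) : ∀ (n : ℕ) (a : V), ∑ k ∈ Finset.range n, Bf E v (k+1) a ≤ 1 := by
  intro n
  induction n with
  | zero => intro a; simp
  | succ n ih =>
    intro a
    rw [Finset.sum_range_succ']
    by_cases hav : a = v
    · subst hav
      have h1 : ∀ k ∈ Finset.range n, Bf E a (k+1+1) a = 0 := by
        intro k _; rw [Bf_two]; simp
      rw [Finset.sum_congr rfl h1, Bf_one]
      simp
    · have h1 : ∀ k ∈ Finset.range n, Bf E v (k+1+1) a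
          = ((outNbrs E a).card : ℝ≥0∞)⁻¹ * ∑ b ∈ outNbrs E a, Bf E v (k+1) b := by
        intro k _; rw [Bf_two, if_neg hav]
      rw [Finset.sum_congr rfl h1, Bf_one, if_neg hav, add_zero, ← Finset.mul_sum,
        Finset.sum_comm]
      have h2 : ∑ b ∈ outNbrs E a, ∑ k ∈ Finset.range n, Bf E v (k+1) b
          ≤ ∑ _b ∈ outNbrs E a, (1:ℝ≥0∞) :=
        Finset.sum_le_sum (fun b _ => ih b)
      calc ((outNbrs E a).card : ℝ≥0∞)⁻¹ * ∑ b ∈ outNbrs E a, ∑ k ∈ Finset.range n, Bf E v (k+1) b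
          ≤ ((outNbrs E a).card : ℝ≥0∞)⁻¹ * ∑ _b ∈ outNbrs E a, (1:ℝ≥0∞) :=
            mul_le_mul_right h2 _
        _ = ((outNbrs E a).card : ℝ≥0∞)⁻¹ * ((outNbrs E a).card : ℝ≥0∞) := by
            rw [Finset.sum_const, nsmul_eq_mul, mul_one]
        _ ≤ 1 := ENNReal.inv_mul_le_one _

/-- First-hit walk predicate. -/
def FH (v : V) (n : ℕ) (a : V) (l : List V) : Prop :=
  l.length = n ∧ l.head? = some a ∧ IsWalk E l ∧ l.getLast? = some v ∧ v ∉ l.dropLast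

lemma FH_sum (v : V) : ∀ (n : ℕ) (a : V) (S : Finset (List V)),
    (∀ l ∈ S, FH E v n a l) → ∑ l ∈ S, walkWt E l ≤ Bf E v n a := by
  intro n
  induction n with
  | zero =>
    intro a S hS
    have hempty : S = ∅ := Finset.eq_empty_of_forall_notMem (fun l hl => by
      obtain ⟨h1, h2, _⟩ := hS l hl
      cases l with
      | nil => simp at h2
      | cons x t => simp at h1)
    simp [hempty]
  | succ n ih =>
    cases n with
    | zero =>
      intro a S hS
      by_cases hav : a = v
      · subst hav
        have hsub : S ⊆ {[a]} := by
          intro l hl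
          obtain ⟨h1, h2, _, h4, _⟩ := hS l hl
          cases l with
          | nil => simp at h2
          | cons x t =>
            cases t with
            | nil =>
              simp only [List.head?_cons, Option.some.injEq] at h2
              simp [h2]
            | cons y r => simp at h1
        calc ∑ l ∈ S, walkWt E l ≤ ∑ l ∈ ({[a]} : Finset (List V)), walkWt E l :=
              Finset.sum_le_sum_of_subset hsub
          _ = 1 := by simp [walkWt]
          _ = Bf E a 1 a := by rw [Bf_one]; simp
      · have hempty : S = ∅ := Finset.eq_empty_of_forall_notMem (fun l hl => by
          obtain ⟨h1, h2, _, h4, _⟩ := hS l hl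
          cases l with
          | nil => simp at h2
          | cons x t =>
            cases t with
            | nil =>
              simp only [List.head?_cons, Option.some.injEq] at h2
              simp only [List.getLast?_singleton, Option.some.injEq] at h4
              exact hav (h2 ▸ h4 ▸ rfl)
            | cons y r => simp at h1)
        simp [hempty, Bf_one, hav]
    | succ m =>
      intro a S hS
      by_cases hav : a = v
      · subst hav
        have hempty : S = ∅ := Finset.eq_empty_of_forall_notMem (fun l hl => by
          obtain ⟨h1, h2, _, _, h5⟩ := hS l hl
          cases l with
          | nil => simp at h2
          | cons x t =>
            cases t with
            | nil => simp at h1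
            | cons y r =>
              simp only [List.head?_cons, Option.some.injEq] at h2
              apply h5
              rw [List.dropLast_cons₂, h2]
              exact List.mem_cons_self)
        simp [hempty, Bf_two]
      · -- decompose each list in S as a :: (y :: r)
        have hshape : ∀ l ∈ S, ∃ y r, l = a :: y :: r ∧ E a y := by
          intro l hl
          obtain ⟨h1, h2, h3, _, _⟩ := hS l hl
          cases l with
          | nil => simp at h2
          | cons x t =>
            cases t with
            | nil => simp at h1
            | cons y r =>
              simp only [List.head?_cons, Option.some.injEq] at h2
              subst h2
              exact ⟨y, r, rfl, h3.1⟩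
        have hmaps : ∀ l ∈ S, l.tail.headD v ∈ outNbrs E a := by
          intro l hl
          obtain ⟨y, r, rfl, hE⟩ := hshape l hl
          simpa [outNbrs] using hE
        rw [← Finset.sum_fiberwise_of_maps_to hmaps (walkWt E)]
        rw [Bf_two, if_neg hav, Finset.mul_sum]
        apply Finset.sum_le_sum
        intro b hb
        set Sb := S.filter (fun l => l.tail.headD v = b) with hSb
        have hSbS : ∀ l ∈ Sb, l ∈ S := fun l hl => (Finset.mem_filter.1 hl).1
        have hwt : ∀ l ∈ Sb, walkWt E l
            = ((outNbrs E a).card : ℝ≥0∞)⁻¹ * walkWt E l.tail := by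
          intro l hl
          obtain ⟨y, r, rfl, _⟩ := hshape l (hSbS l hl)
          rw [walkWt]
          rfl
        rw [Finset.sum_congr rfl hwt, ← Finset.mul_sum]
        apply mul_le_mul_right
        have hinj : ∀ x ∈ Sb, ∀ y ∈ Sb, x.tail = y.tail → x = y := by
          intro x hx y hy hxy
          obtain ⟨y1, r1, rfl, _⟩ := hshape x (hSbS x hx)
          obtain ⟨y2, r2, rfl, _⟩ := hshape y (hSbS y hy)
          simp only [List.tail_cons] at hxy
          rw [hxy]
        rw [← Finset.sum_image hinj]
        apply ih b
        intro t ht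
        obtain ⟨l, hl, rfl⟩ := Finset.mem_image.1 ht
        have hlS : l ∈ S := hSbS l hl
        obtain ⟨h1, _, h3, h4, h5⟩ := hS l hlS
        obtain ⟨y, r, hlyr, _⟩ := hshape l hlS
        have hyb : y = b := by
          have hmf := (Finset.mem_filter.1 hl).2
          rw [hlyr] at hmf
          simpa using hmf
        subst hlyr
        subst hyb
        simp only [List.tail_cons]
        rw [List.length_cons] at h1
        rw [List.getLast?_cons_cons] at h4
        rw [List.dropLast_cons₂] at h5
        refine ⟨by omega, rfl, h3.2, h4, fun hc => h5 (List.mem_cons_of_mem _ hc)⟩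

lemma coverProb_le_one (u v : V) : coverProb E u v ≤ 1 := by
  rw [coverProb, ENNReal.tsum_eq_iSup_sum]
  apply iSup_le
  intro s
  have hinj : ∀ x ∈ s, ∀ y ∈ s, (x : List V) = (y : List V) → x = y := by
    intro x _ y _ h; exact Subtype.ext h
  rw [show (∑ l ∈ s, walkWt E (l : List V)) = ∑ l ∈ s.image Subtype.val, walkWt E l from
    (Finset.sum_image hinj).symm]
  set S := s.image Subtype.val with hS
  set N := S.sup List.length with hN
  have hmaps : ∀ l ∈ S, l.length ∈ Finset.range (N+1) := fun l hl =>
    Finset.mem_range.2 (Nat.lt_succ_of_le (Finset.le_sup hl))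
  rw [← Finset.sum_fiberwise_of_maps_to hmaps (walkWt E)]
  have hstep : ∀ k ∈ Finset.range (N+1),
      ∑ l ∈ S.filter (fun l => l.length = k), walkWt E l ≤ Bf E v k u := by
    intro k _
    apply FH_sum
    intro l hl
    obtain ⟨hl1, hl2⟩ := Finset.mem_filter.1 hl
    obtain ⟨l', _, rfl⟩ := Finset.mem_image.1 hl1
    obtain ⟨hw, hh, hg, _, hd⟩ := l'.2
    exact ⟨hl2, hh, hw, hg, hd⟩
  calc ∑ k ∈ Finset.range (N+1), ∑ l ∈ S.filter (fun l => l.length = k), walkWt E l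
      ≤ ∑ k ∈ Finset.range (N+1), Bf E v k u := Finset.sum_le_sum hstep
    _ = ∑ k ∈ Finset.range N, Bf E v (k+1) u + Bf E v 0 u := Finset.sum_range_succ' _ _
    _ ≤ 1 := by rw [Bf_zero, add_zero]; exact Bf_sum E v N u

end Aux

/-- If there is no edge from `u` to `v`, some cover tour from `u` to `v` exists, and
`P(L(u,v)) ≤ P(L(x,v))` for every out-neighbour `x` of `u`, then every cover tour from
`u` to `v` revisits `u`. -/
theorem stmt15 {V : Type*} [Fintype V] [DecidableEq V] (E : V → V → Prop) [DecidableRel E]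
    (hconn : Conn E) (u v : V) (hne : u ≠ v) (huv : ¬ E u v)
    (hex : ∃ T : List V, IsCoverTour E u v T)
    (hle : ∀ x : V, E u x → coverProb E u v ≤ coverProb E x v) :
    ∀ T : List V, IsCoverTour E u v T → 2 ≤ T.count u := by
  intro T hT
  by_contra hcount
  push_neg at hcount
  obtain ⟨hTw, hTh, hTl, hTall, hTd⟩ := id hT
  obtain ⟨b, T₂, rfl⟩ : ∃ b T₂, T = u :: b :: T₂ := by
    cases T with
    | nil => simp at hTh
    | cons x t =>
      simp only [List.head?_cons, Option.some.injEq] at hTh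
      subst hTh
      cases t with
      | nil =>
        simp only [List.getLast?_singleton, Option.some.injEq] at hTl
        exact absurd hTl hne
      | cons y r => exact ⟨y, r, rfl⟩
  have hEub : E u b := hTw.1
  have hbN : b ∈ outNbrs E u := by simpa [outNbrs] using hEub
  set d : ℕ := (outNbrs E u).card with hd
  have hd0 : (d : ℝ≥0∞) ≠ 0 := Nat.cast_ne_zero.2 (Finset.card_ne_zero_of_mem hbN)
  have hdT : (d : ℝ≥0∞) ≠ ⊤ := ENNReal.natCast_ne_top _
  -- u occurs exactly once in T
  have huT₂ : u ∉ b :: T₂ := by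
    intro hmem
    have h1 : 1 ≤ (b :: T₂).count u := List.count_pos_iff.2 hmem
    have h2 : (u :: b :: T₂).count u = (b :: T₂).count u + 1 := List.count_cons_self
    omega
  set t0 : {l : List V // IsCoverTour E u v l} := ⟨u :: b :: T₂, hT⟩ with ht0
  -- extended cover tours
  have hext : ∀ x : V, x ∈ outNbrs E u → ∀ l : List V, IsCoverTour E x v l →
      IsCoverTour E u v (u :: l) := by
    intro x hx l hl
    obtain ⟨h1, h2, h3, h4, h5⟩ := hl
    have hEux : E u x := by simpa [outNbrs] using hx
    cases l with
    | nil => simp at h2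
    | cons y r =>
      simp only [List.head?_cons, Option.some.injEq] at h2
      subst h2
      refine ⟨⟨hEux, h1⟩, rfl, ?_, fun z => List.mem_cons_of_mem _ (h4 z), ?_⟩
      · rw [List.getLast?_cons_cons]; exact h3
      · intro hc
        rw [List.dropLast_cons₂] at hc
        rcases List.mem_cons.1 hc with h | h
        · exact hne h.symm
        · exact h5 h
  -- the injection
  let σ := (x : {x // x ∈ outNbrs E u}) × {l : List V // IsCoverTour E (x : V) v l}
  let g : σ → {l : List V // IsCoverTour E u v l} :=
    fun p => ⟨u :: (p.2 : List V), hext p.1 p.1.2 _ p.2.2⟩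
  have hgne : ∀ p : σ, g p ≠ t0 := by
    intro p hp
    apply huT₂
    have hlist : u :: (p.2 : List V) = u :: b :: T₂ := congrArg Subtype.val hp
    have : u ∈ (p.2 : List V) := (p.2.2).2.2.2.1 u
    rw [List.cons.injEq] at hlist
    rw [← hlist.2]
    exact this
  have hginj : Function.Injective g := by
    intro p q hpq
    have hlist : u :: (p.2 : List V) = u :: (q.2 : List V) := congrArg Subtype.val hpq
    rw [List.cons.injEq] at hlist
    have hval : (p.2 : List V) = (q.2 : List V) := hlist.2
    have hx : (p.1 : V) = (q.1 : V) := by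
      have hp2 := p.2.2.2.1
      have hq2 := q.2.2.2.1
      rw [hval] at hp2
      rw [hp2] at hq2
      exact Option.some_injective _ hq2
    rcases p with ⟨⟨x, hx1⟩, l⟩
    rcases q with ⟨⟨y, hy1⟩, m⟩
    simp only at hx hval
    subst hx
    congr 1
    exact Subtype.ext hval
  -- sum over the sigma type
  have hsum1 : ∑' p : σ, walkWt E ((g p : List V))
      = ∑ x ∈ outNbrs E u, ((d : ℝ≥0∞)⁻¹ * coverProb E x v) := by
    rw [ENNReal.tsum_sigma (fun x l => walkWt E ((g ⟨x, l⟩ : List V)))]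
    rw [← Finset.tsum_subtype (outNbrs E u) (fun x => (d : ℝ≥0∞)⁻¹ * coverProb E x v)]
    apply tsum_congr
    intro x
    rw [coverProb, ← ENNReal.tsum_mul_left]
    apply tsum_congr
    intro l
    have hlne : (l : List V) ≠ [] := by
      intro hc
      have := l.2.2.1
      rw [hc] at this
      simp at this
    show walkWt E (u :: (l : List V)) = _
    rw [walkWt_cons E u _ hlne]
  -- main inequality
  have hmain : walkWt E (u :: b :: T₂) + ∑ x ∈ outNbrs E u, ((d : ℝ≥0∞)⁻¹ * coverProb E x v)
      ≤ coverProb E u v := by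
    rw [coverProb, ENNReal.tsum_eq_add_tsum_ite t0]
    apply add_le_add
    · exact le_of_eq rfl
    · rw [← hsum1]
      have heq : ∀ p : σ, walkWt E ((g p : List V))
          = (fun l : {l : List V // IsCoverTour E u v l} =>
              @ite _ (l = t0) (Classical.propDecidable _) 0 (walkWt E (l : List V))) (g p) := by
        intro p
        exact (if_neg (hgne p)).symm
      rw [tsum_congr heq]
      exact ENNReal.tsum_comp_le_tsum_of_injective hginj
        (fun l : {l : List V // IsCoverTour E u v l} =>
          @ite _ (l = t0) (Classical.propDecidable _) 0 (walkWt E (l : List V)))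
  -- lower bound the sum using hle
  have hlb : ∑ x ∈ outNbrs E u, ((d : ℝ≥0∞)⁻¹ * coverProb E u v)
      ≤ ∑ x ∈ outNbrs E u, ((d : ℝ≥0∞)⁻¹ * coverProb E x v) := by
    apply Finset.sum_le_sum
    intro x hx
    exact mul_le_mul_right (hle x (by simpa [outNbrs] using hx)) _
  have hconst : ∑ x ∈ outNbrs E u, ((d : ℝ≥0∞)⁻¹ * coverProb E u v) = coverProb E u v := by
    rw [Finset.sum_const, nsmul_eq_mul, ← mul_assoc, ← hd,
      ENNReal.mul_inv_cancel hd0 hdT, one_mul]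
  have hfinal : walkWt E (u :: b :: T₂) + coverProb E u v ≤ coverProb E u v := by
    calc walkWt E (u :: b :: T₂) + coverProb E u v
        = walkWt E (u :: b :: T₂) + ∑ x ∈ outNbrs E u, ((d : ℝ≥0∞)⁻¹ * coverProb E u v) := by
          rw [hconst]
      _ ≤ walkWt E (u :: b :: T₂) + ∑ x ∈ outNbrs E u, ((d : ℝ≥0∞)⁻¹ * coverProb E x v) :=
          add_le_add le_rfl hlb
      _ ≤ coverProb E u v := hmain
  have hfin : coverProb E u v ≠ ⊤ :=
    ne_top_of_le_ne_top ENNReal.one_ne_top (coverProb_le_one E u v)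
  have h0 : walkWt E (u :: b :: T₂) + coverProb E u v ≤ 0 + coverProb E u v := by
    rw [zero_add]; exact hfinal
  have : walkWt E (u :: b :: T₂) ≤ 0 := (ENNReal.add_le_add_iff_right hfin).mp h0
  exact walkWt_ne_zero E _ (le_antisymm this zero_le)
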